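/- Let m ≥ 2, Σ = ∏_{n≥1} {0, …, m−1} with the odometer homeomorphism β, let μ be the uniform Bernoulli product measure on Σ, and let C(Σ, Z) be the group of locally constant Z-valued functions. Then the map h ↦ ∫ h dμ induces a group isomorphism from the coinvariants C(Σ, Z)/⟨h − h∘β : h ∈ C(Σ, Z)⟩ onto Z[1/m]. -/

import Mathlib

open MeasureTheory

/-- The value in `ℤ/m^kℤ` of the first `k` digits of `x ∈ ∏ {0,…,m-1}`. -/
def odoVal (m : ℕ) (x : ℕ → Fin m) (k : ℕ) : ZMod (m ^ k) :=
  ∑ n ∈ Finset.range k, ((x n).val : ZMod (m ^ k)) * (m : ZMod (m ^ k)) ^ n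

/-- The subgroup of coboundaries `h - h ∘ β` inside the locally constant functions. -/
def odoCobound (m : ℕ) (β : (ℕ → Fin m) → (ℕ → Fin m)) :
    AddSubgroup (LocallyConstant (ℕ → Fin m) ℤ) :=
  AddSubgroup.closure
    {g : LocallyConstant (ℕ → Fin m) ℤ |
      ∃ h : LocallyConstant (ℕ → Fin m) ℤ, ∀ x, g x = h x - h (β x)}

def valZ (m k : ℕ) (w : Fin k → Fin m) : ZMod (m ^ k) :=
  ((finFunctionFinEquiv w : ℕ) : ZMod (m ^ k))

lemma odoVal_eq_valZ (m k : ℕ) (x : ℕ → Fin m) :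
    odoVal m x k = valZ m k (fun i => x i) := by
  unfold odoVal valZ
  rw [finFunctionFinEquiv_apply]
  push_cast
  rw [Finset.sum_range]

lemma valZ_injective {m : ℕ} (hm : 2 ≤ m) (k : ℕ) : Function.Injective (valZ m k) := by
  intro w w' h
  unfold valZ at h
  have h1 : ((finFunctionFinEquiv w : ℕ) : ZMod (m ^ k)).val
      = ((finFunctionFinEquiv w' : ℕ) : ZMod (m ^ k)).val := by rw [h]
  rw [ZMod.val_cast_of_lt (finFunctionFinEquiv w).isLt,
      ZMod.val_cast_of_lt (finFunctionFinEquiv w').isLt] at h1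
  exact finFunctionFinEquiv.injective (Fin.val_injective h1)

lemma valZ_bijective {m : ℕ} (hm : 2 ≤ m) (k : ℕ) : Function.Bijective (valZ m k) := by
  haveI : NeZero (m ^ k) := ⟨(pow_pos (by omega : 0 < m) k).ne'⟩
  rw [Fintype.bijective_iff_injective_and_card]
  refine ⟨valZ_injective hm k, ?_⟩
  simp [Fintype.card_fun, ZMod.card]

noncomputable def valE {m : ℕ} (hm : 2 ≤ m) (k : ℕ) : (Fin k → Fin m) ≃ ZMod (m ^ k) :=
  Equiv.ofBijective _ (valZ_bijective hm k)

lemma valE_apply {m : ℕ} (hm : 2 ≤ m) (k : ℕ) (w : Fin k → Fin m) :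
    valE hm k w = valZ m k w := rfl

lemma isLC (m k : ℕ) {α : Type*} (K : ZMod (m ^ k) → α) :
    IsLocallyConstant fun x : ℕ → Fin m => K (odoVal m x k) := by
  have hπ : Continuous fun x : ℕ → Fin m => (fun i : Fin k => x i) :=
    continuous_pi fun i => continuous_apply _
  have heq : (fun x : ℕ → Fin m => K (odoVal m x k))
      = (K ∘ valZ m k) ∘ (fun x => fun i : Fin k => x i) := by
    funext x; simp [odoVal_eq_valZ, Function.comp]
  rw [heq]
  intro s
  rw [Set.preimage_comp]
  exact IsOpen.preimage hπ (isOpen_discrete _)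

lemma depend_first (m : ℕ) (h : LocallyConstant (ℕ → Fin m) ℤ) :
    ∃ k : ℕ, ∀ x y : ℕ → Fin m, (∀ n < k, x n = y n) → h x = h y := by
  classical
  -- for each x, a finset I and cylinder neighborhood inside the fiber of h
  have step : ∀ x : ℕ → Fin m, ∃ I : Finset ℕ,
      {y : ℕ → Fin m | ∀ n ∈ I, y n = x n} ⊆ h ⁻¹' {h x} := by
    intro x
    have hopen : IsOpen (h ⁻¹' {h x}) := h.isLocallyConstant _
    obtain ⟨I, u, hu, hsub⟩ := isOpen_pi_iff.mp hopen x rfl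
    refine ⟨I, fun y hy => hsub ?_⟩
    intro n hn
    rw [Set.mem_setOf_eq.mp hy n hn]
    exact (hu n hn).2
  choose I hI using step
  set C : (ℕ → Fin m) → Set (ℕ → Fin m) := fun x => {y | ∀ n ∈ I x, y n = x n} with hC
  have hCopen : ∀ x, IsOpen (C x) := by
    intro x
    have : C x = ⋂ n ∈ I x, (fun y : ℕ → Fin m => y n) ⁻¹' {x n} := by
      ext y; simp [hC]
    rw [this]
    exact isOpen_biInter_finset fun n _ =>
      IsOpen.preimage (continuous_apply n) (isOpen_discrete _)
  have hcover : (Set.univ : Set (ℕ → Fin m)) ⊆ ⋃ x, C x := by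
    intro x _
    exact Set.mem_iUnion.mpr ⟨x, fun n _ => rfl⟩
  obtain ⟨t, ht⟩ := isCompact_univ.elim_finite_subcover C hCopen hcover
  refine ⟨(t.sup fun x => (I x).sup id) + 1, ?_⟩
  intro x y hxy
  obtain ⟨z, hz⟩ := Set.mem_iUnion.mp (ht (Set.mem_univ x))
  simp only [Set.mem_iUnion, exists_prop] at hz
  obtain ⟨hzt, hxz⟩ := hz
  have hny : y ∈ C z := by
    intro n hn
    have hlt : n < t.sup (fun x => (I x).sup id) + 1 := by
      have h1 : n ≤ (I z).sup id := Finset.le_sup (f := id) hn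
      have h2 : (I z).sup id ≤ t.sup fun x => (I x).sup id :=
        Finset.le_sup (f := fun x => (I x).sup id) hzt
      omega
    rw [← hxy n hlt]
    exact hxz n hn
  have e1 : h x = h z := hI z hxz
  have e2 : h y = h z := hI z hny
  rw [e1, e2]

def extWord {m : ℕ} (hm : 2 ≤ m) {k : ℕ} (w : Fin k → Fin m) : ℕ → Fin m :=
  fun n => if hn : n < k then w ⟨n, hn⟩ else ⟨0, by omega⟩

lemma factor {m : ℕ} (hm : 2 ≤ m) (h : LocallyConstant (ℕ → Fin m) ℤ) :
    ∃ (k : ℕ) (K : ZMod (m ^ k) → ℤ), ∀ x, h x = K (odoVal m x k) := by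
  obtain ⟨k, hk⟩ := depend_first m h
  refine ⟨k, fun j => h (extWord hm ((valE hm k).symm j)), fun x => ?_⟩
  have h1 : (valE hm k).symm (odoVal m x k) = fun i : Fin k => x i := by
    apply (valE hm k).injective
    rw [Equiv.apply_symm_apply, valE_apply, odoVal_eq_valZ]
  show h x = h (extWord hm ((valE hm k).symm (odoVal m x k)))
  rw [h1]
  apply hk
  intro n hn
  simp [extWord, hn]

lemma fiber_eq_cylinder {m : ℕ} (hm : 2 ≤ m) (k : ℕ) (j : ZMod (m ^ k)) :
    {x : ℕ → Fin m | odoVal m x k = j}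
      = {x : ℕ → Fin m | ∀ n < k, x n = extWord hm ((valE hm k).symm j) n} := by
  ext x
  simp only [Set.mem_setOf_eq]
  constructor
  · intro hx n hn
    have h1 : (valE hm k).symm j = fun i : Fin k => x i := by
      apply (valE hm k).injective
      rw [Equiv.apply_symm_apply, valE_apply, ← odoVal_eq_valZ, hx]
    rw [h1]
    simp [extWord, hn]
  · intro hx
    rw [odoVal_eq_valZ]
    have h1 : (fun i : Fin k => x i) = (valE hm k).symm j := by
      funext i
      rw [hx i i.isLt]
      simp [extWord, i.isLt]
    rw [h1, ← valE_apply hm k, Equiv.apply_symm_apply]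

lemma fiber_measurable {m : ℕ} (k : ℕ) (j : ZMod (m ^ k)) :
    MeasurableSet {x : ℕ → Fin m | odoVal m x k = j} := by
  have : {x : ℕ → Fin m | odoVal m x k = j}
      = (fun x : ℕ → Fin m => fun i : Fin k => x i) ⁻¹' {w | valZ m k w = j} := by
    ext x; simp [odoVal_eq_valZ]
  rw [this]
  exact (Set.toFinite _).measurableSet.preimage
    (measurable_pi_lambda _ fun i => measurable_pi_apply _)

lemma integral_K {m : ℕ} (hm : 2 ≤ m) (μ : Measure (ℕ → Fin m)) [IsProbabilityMeasure μ]
    (hμ : ∀ (k : ℕ) (c : ℕ → Fin m),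
      μ {x | ∀ n < k, x n = c n} = (((m : ENNReal)) ^ k)⁻¹)
    (k : ℕ) [NeZero (m ^ k)] (K : ZMod (m ^ k) → ℤ) :
    Integrable (fun x => (K (odoVal m x k) : ℝ)) μ ∧
      ∫ x, (K (odoVal m x k) : ℝ) ∂μ = (∑ j, (K j : ℝ)) / (m : ℝ) ^ k := by
  have hrepr : (fun x : ℕ → Fin m => (K (odoVal m x k) : ℝ))
      = fun x => ∑ j : ZMod (m ^ k),
          Set.indicator {y : ℕ → Fin m | odoVal m y k = j} (fun _ => (K j : ℝ)) x := by
    funext x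
    rw [Finset.sum_eq_single (odoVal m x k)]
    · exact (Set.indicator_of_mem
        (show x ∈ {y : ℕ → Fin m | odoVal m y k = odoVal m x k} from rfl)
        fun _ => (K (odoVal m x k) : ℝ)).symm
    · intro j _ hj
      apply Set.indicator_of_notMem
      intro hx
      have hx' : odoVal m x k = j := hx
      exact hj hx'.symm
    · intro hmem
      exact absurd (Finset.mem_univ _) hmem
  have hμj : ∀ j : ZMod (m ^ k),
      μ {x : ℕ → Fin m | odoVal m x k = j} = (((m : ENNReal)) ^ k)⁻¹ := by
    intro j
    rw [fiber_eq_cylinder hm k j]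
    exact hμ k _
  have hint : ∀ j : ZMod (m ^ k), Integrable
      (fun x => Set.indicator {y : ℕ → Fin m | odoVal m y k = j} (fun _ => (K j : ℝ)) x) μ := by
    intro j
    exact (integrable_const _).indicator (fiber_measurable k j)
  constructor
  · rw [hrepr]
    exact integrable_finset_sum _ fun j _ => hint j
  · rw [hrepr, integral_finset_sum _ fun j _ => hint j]
    have hterm : ∀ j : ZMod (m ^ k),
        ∫ x, Set.indicator {y : ℕ → Fin m | odoVal m y k = j} (fun _ => (K j : ℝ)) x ∂μ
          = ((m : ℝ) ^ k)⁻¹ * (K j : ℝ) := by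
      intro j
      rw [integral_indicator_const _ (fiber_measurable k j), measureReal_def, hμj j, smul_eq_mul]
      congr 1
      simp [ENNReal.toReal_inv, ENNReal.toReal_pow]
    simp_rw [hterm]
    rw [← Finset.mul_sum, inv_mul_eq_div]

lemma sum_univ_zmod {N : ℕ} [NeZero N] (f : ZMod N → ℤ) :
    ∑ j : ZMod N, f j = ∑ i ∈ Finset.range N, f (i : ZMod N) := by
  have hbij : Function.Bijective (fun i : Fin N => ((i : ℕ) : ZMod N)) := by
    rw [Fintype.bijective_iff_injective_and_card]
    refine ⟨fun i i' hii => ?_, by simp [ZMod.card]⟩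
    have h := congrArg ZMod.val hii
    rw [ZMod.val_cast_of_lt i.isLt, ZMod.val_cast_of_lt i'.isLt] at h
    exact Fin.ext h
  rw [Finset.sum_range]
  exact (Fintype.sum_bijective _ hbij (fun i : Fin N => f ((i : ℕ) : ZMod N)) f
    (fun _ => rfl)).symm

lemma zmod_telescope {N : ℕ} [NeZero N] (K : ZMod N → ℤ) (hsum : ∑ j, K j = 0) :
    ∃ G : ZMod N → ℤ, ∀ v : ZMod N, K v = G v - G (v + 1) := by
  refine ⟨fun j => -(∑ i ∈ Finset.range j.val, K ((i : ℕ) : ZMod N)), fun v => ?_⟩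
  show K v = -(∑ i ∈ Finset.range v.val, K ((i : ℕ) : ZMod N))
      - -(∑ i ∈ Finset.range (v + 1).val, K ((i : ℕ) : ZMod N))
  have hv : ((v.val : ℕ) : ZMod N) = v := ZMod.natCast_rightInverse v
  rcases Nat.lt_or_ge (v.val + 1) N with hlt | hge
  · have h1 : (v + 1).val = v.val + 1 := by
      have hc : v + 1 = ((v.val + 1 : ℕ) : ZMod N) := by rw [Nat.cast_add_one, hv]
      rw [hc, ZMod.val_cast_of_lt hlt]
    rw [h1, Finset.sum_range_succ, hv]
    ring
  · have heq : v.val + 1 = N := le_antisymm (ZMod.val_lt v) hge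
    have h1 : v + 1 = 0 := by rw [← hv, ← Nat.cast_add_one, heq, ZMod.natCast_self]
    rw [h1, ZMod.val_zero, Finset.sum_range_zero, neg_zero, sub_zero]
    have h2 : ∑ i ∈ Finset.range N, K ((i : ℕ) : ZMod N) = 0 := by
      rw [← sum_univ_zmod]; exact hsum
    have h3 : ∑ i ∈ Finset.range (v.val + 1), K ((i : ℕ) : ZMod N) = 0 := by
      rw [heq]; exact h2
    rw [Finset.sum_range_succ, hv] at h3
    omega

/-- integration against the uniform Bernoulli measure induces an isomorphism
from the coinvariants `C(Σ, ℤ)/⟨h - h∘β⟩` of the odometer onto `ℤ[1/m]`. -/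
theorem stmt_14 (m : ℕ) (hm : 2 ≤ m) (β : (ℕ → Fin m) → (ℕ → Fin m))
    (hβcont : Continuous β)
    (hβ : ∀ (x : ℕ → Fin m) (k : ℕ), odoVal m (β x) k = odoVal m x k + 1)
    (μ : Measure (ℕ → Fin m)) [IsProbabilityMeasure μ]
    (hμ : ∀ (k : ℕ) (c : ℕ → Fin m),
      μ {x | ∀ n < k, x n = c n} = (((m : ENNReal)) ^ k)⁻¹) :
    ∃ φ : (LocallyConstant (ℕ → Fin m) ℤ ⧸ odoCobound m β) →+ ℝ,
      (∀ h : LocallyConstant (ℕ → Fin m) ℤ,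
        φ (QuotientAddGroup.mk h) = ∫ x, (h x : ℝ) ∂μ) ∧
      Function.Injective φ ∧
      Set.range φ = {q : ℝ | ∃ (v : ℤ) (i : ℕ), q = (v : ℝ) / (m : ℝ) ^ i} := by
  classical
  have hNZ : ∀ k : ℕ, NeZero (m ^ k) := fun k => ⟨(pow_pos (by omega : 0 < m) k).ne'⟩
  have hint : ∀ h : LocallyConstant (ℕ → Fin m) ℤ, Integrable (fun x => (h x : ℝ)) μ := by
    intro h
    obtain ⟨k, K, hK⟩ := factor hm h
    haveI := hNZ k
    have heq : (fun x : ℕ → Fin m => ((h x : ℤ) : ℝ)) = fun x => ((K (odoVal m x k) : ℤ) : ℝ) :=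
      funext fun x => by rw [hK x]
    rw [heq]
    exact (integral_K hm μ hμ k K).1
  have hadd : ∀ a b : LocallyConstant (ℕ → Fin m) ℤ,
      (∫ x, (((a + b) x : ℤ) : ℝ) ∂μ) = (∫ x, ((a x : ℤ) : ℝ) ∂μ) + ∫ x, ((b x : ℤ) : ℝ) ∂μ := by
    intro a b
    have heq : (fun x : ℕ → Fin m => (((a + b) x : ℤ) : ℝ))
        = fun x => ((a x : ℤ) : ℝ) + ((b x : ℤ) : ℝ) := by
      funext x
      rw [LocallyConstant.add_apply]
      push_cast
      ring
    rw [heq]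
    exact integral_add (hint a) (hint b)
  set I : LocallyConstant (ℕ → Fin m) ℤ →+ ℝ :=
    AddMonoidHom.mk' (fun h => ∫ x, ((h x : ℤ) : ℝ) ∂μ) hadd with hIdef
  have hgen : ∀ g ∈ {g : LocallyConstant (ℕ → Fin m) ℤ |
      ∃ h : LocallyConstant (ℕ → Fin m) ℤ, ∀ x, g x = h x - h (β x)},
      (∫ x, ((g x : ℤ) : ℝ) ∂μ) = 0 := by
    rintro g ⟨f, hf⟩
    obtain ⟨k, K, hK⟩ := factor hm f
    haveI := hNZ k
    have heq : (fun x : ℕ → Fin m => ((g x : ℤ) : ℝ))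
        = fun x => ((K (odoVal m x k) - K (odoVal m x k + 1) : ℤ) : ℝ) := by
      funext x
      rw [hf x, hK x, hK (β x), hβ x k]
    rw [heq]
    have h2 : ∫ x, ((K (odoVal m x k) - K (odoVal m x k + 1) : ℤ) : ℝ) ∂μ
        = (∑ j : ZMod (m ^ k), ((K j - K (j + 1) : ℤ) : ℝ)) / (m : ℝ) ^ k :=
      (integral_K hm μ hμ k (fun j => K j - K (j + 1))).2
    rw [h2]
    have hsum2 : ∑ j : ZMod (m ^ k), ((K (j + 1) : ℤ) : ℝ)
        = ∑ j : ZMod (m ^ k), ((K j : ℤ) : ℝ) := by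
      have := Equiv.sum_comp (Equiv.addRight (1 : ZMod (m ^ k)))
        (fun j => ((K j : ℤ) : ℝ))
      simpa using this
    have hs : ∑ j : ZMod (m ^ k), ((K j - K (j + 1) : ℤ) : ℝ) = 0 := by
      push_cast
      rw [Finset.sum_sub_distrib, hsum2, sub_self]
    rw [hs, zero_div]
  have hle : odoCobound m β ≤ I.ker := by
    rw [odoCobound, AddSubgroup.closure_le]
    intro g hg
    show g ∈ I.ker
    rw [AddMonoidHom.mem_ker]
    exact hgen g hg
  refine ⟨QuotientAddGroup.lift _ I hle, ?_, ?_, ?_⟩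
  · intro h
    exact QuotientAddGroup.lift_mk _ _ h
  · rw [injective_iff_map_eq_zero]
    intro q hq
    obtain ⟨h, rfl⟩ := QuotientAddGroup.mk_surjective q
    rw [QuotientAddGroup.lift_mk] at hq
    obtain ⟨k, K, hK⟩ := factor hm h
    haveI := hNZ k
    have h0 : ∫ x, ((h x : ℤ) : ℝ) ∂μ = 0 := hq
    have hval : ∫ x, ((h x : ℤ) : ℝ) ∂μ = (∑ j : ZMod (m ^ k), ((K j : ℤ) : ℝ)) / (m : ℝ) ^ k := by
      have heq : (fun x : ℕ → Fin m => ((h x : ℤ) : ℝ))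
          = fun x => ((K (odoVal m x k) : ℤ) : ℝ) := funext fun x => by rw [hK x]
      rw [heq]
      exact (integral_K hm μ hμ k K).2
    have hm0 : ((m : ℝ) ^ k) ≠ 0 := by
      apply pow_ne_zero
      simp only [ne_eq, Nat.cast_eq_zero]
      omega
    have hsR : (∑ j : ZMod (m ^ k), ((K j : ℤ) : ℝ)) = 0 := by
      rw [hval] at h0
      exact (div_eq_zero_iff.mp h0).resolve_right hm0
    have hsumK : ∑ j : ZMod (m ^ k), K j = 0 := by
      have : ((∑ j : ZMod (m ^ k), K j : ℤ) : ℝ) = 0 := by push_cast; exact hsR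
      exact_mod_cast this
    obtain ⟨G, hG⟩ := zmod_telescope K hsumK
    have hmem : h ∈ odoCobound m β := by
      apply AddSubgroup.subset_closure
      refine ⟨⟨fun x => G (odoVal m x k), isLC m k G⟩, fun x => ?_⟩
      show h x = G (odoVal m x k) - G (odoVal m (β x) k)
      rw [hβ x k, hK x]
      exact hG _
    exact (QuotientAddGroup.eq_zero_iff h).mpr hmem
  · ext r
    simp only [Set.mem_range, Set.mem_setOf_eq]
    constructor
    · rintro ⟨q, rfl⟩
      obtain ⟨h, rfl⟩ := QuotientAddGroup.mk_surjective q
      obtain ⟨k, K, hK⟩ := factor hm h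
      haveI := hNZ k
      refine ⟨∑ j : ZMod (m ^ k), K j, k, ?_⟩
      rw [QuotientAddGroup.lift_mk]
      show (∫ x, ((h x : ℤ) : ℝ) ∂μ) = _
      have heq : (fun x : ℕ → Fin m => ((h x : ℤ) : ℝ))
          = fun x => ((K (odoVal m x k) : ℤ) : ℝ) := funext fun x => by rw [hK x]
      rw [heq, (integral_K hm μ hμ k K).2, Int.cast_sum]
    · rintro ⟨v, i, rfl⟩
      haveI := hNZ i
      set K : ZMod (m ^ i) → ℤ := fun j => if j = 0 then v else 0 with hKdef
      refine ⟨QuotientAddGroup.mk ⟨fun x => K (odoVal m x i), isLC m i K⟩, ?_⟩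
      rw [QuotientAddGroup.lift_mk]
      show (∫ x, ((K (odoVal m x i) : ℤ) : ℝ) ∂μ) = _
      rw [(integral_K hm μ hμ i K).2]
      congr 1
      have : ∑ j : ZMod (m ^ i), ((K j : ℤ) : ℝ) = (v : ℝ) := by
        simp only [hKdef, apply_ite (fun z : ℤ => (z : ℝ)), Int.cast_zero]
        rw [Finset.sum_ite_eq']
        simp
      rw [this]
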